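/- The unique positive definite fixed points of the maps u ↦ ϖ + (I+u)^{-1} u and v ↦ (I + (ϖ+v)^{-1})^{-1} are u_∞ = ϖ/2 + (ϖ + (ϖ/2)^2)^{1/2} and r_∞ = -ϖ/2 + (ϖ + (ϖ/2)^2)^{1/2}, respectively, and they satisfy r_∞ = (I + u_∞^{-1})^{-1} and u_∞ = r_∞ + ϖ. -/

import Mathlib

open Matrix
open scoped Classical

/-- The principal symmetric positive semidefinite square root of a matrix
(junk value `0` if the matrix is not positive semidefinite). -/
noncomputable def psqrt {d : ℕ} (A : Matrix (Fin d) (Fin d) ℝ) : Matrix (Fin d) (Fin d) ℝ :=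
  if h : A.PosSemidef then
    h.1.eigenvectorUnitary.1 * diagonal ((↑) ∘ (√·) ∘ h.1.eigenvalues) *
      (star h.1.eigenvectorUnitary : Matrix (Fin d) (Fin d) ℝ)
  else 0

open scoped MatrixOrder in
lemma psqrt_eq_of_mul_self {d : ℕ} {A X : Matrix (Fin d) (Fin d) ℝ} (hA : A.PosSemidef)
    (hX : X.PosSemidef) (h : X * X = A) : psqrt A = X := by
  have e1 : psqrt A = hA.1.cfc Real.sqrt := by
    rw [psqrt, dif_pos hA, IsHermitian.cfc, Unitary.conjStarAlgAut_apply]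
    rfl
  rw [e1, ← hA.1.cfc_eq, ← cfcₙ_eq_cfc, ← CFC.sqrt_eq_real_sqrt A hA.nonneg]
  exact CFC.sqrt_unique h hX.nonneg

lemma posDef_smul' {d : ℕ} {c : ℝ} (hc : 0 < c) {A : Matrix (Fin d) (Fin d) ℝ} (hA : A.PosDef) :
    (c • A).PosDef := by
  refine Matrix.PosDef.of_dotProduct_mulVec_pos ?_ fun x hx => ?_
  · have := hA.1
    unfold Matrix.IsHermitian at this ⊢
    rw [conjTranspose_smul, this]
    simp
  · rw [smul_mulVec, dotProduct_smul, smul_eq_mul]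
    exact mul_pos hc (hA.dotProduct_mulVec_pos hx)

lemma posDef_conj' {d : ℕ} {A B : Matrix (Fin d) (Fin d) ℝ} (hA : A.PosDef) (hB : IsUnit B) :
    (B * A * Bᴴ).PosDef := by
  refine Matrix.PosDef.of_dotProduct_mulVec_pos ?_ fun x hx => ?_
  · unfold Matrix.IsHermitian
    simp only [conjTranspose_mul, conjTranspose_conjTranspose, hA.1.eq, mul_assoc]
  · have hBH : IsUnit Bᴴ := by
      rw [Matrix.isUnit_iff_isUnit_det] at hB ⊢
      simpa using hB
    have hy : Bᴴ *ᵥ x ≠ 0 := by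
      intro h
      exact hx <| (Matrix.mulVec_injective_iff_isUnit.mpr hBH) (by simpa using h)
    have key : star x ⬝ᵥ ((B * A * Bᴴ) *ᵥ x) = star (Bᴴ *ᵥ x) ⬝ᵥ (A *ᵥ (Bᴴ *ᵥ x)) := by
      rw [star_mulVec, conjTranspose_conjTranspose, ← mulVec_mulVec, ← mulVec_mulVec,
        dotProduct_mulVec (star x) B]
    rw [key]
    exact hA.dotProduct_mulVec_pos hy

/-- `(1 + A⁻¹)⁻¹ = (1 + A)⁻¹ * A` for positive definite `A`. -/
lemma inv_one_add_inv' {d : ℕ} {A : Matrix (Fin d) (Fin d) ℝ} (hA : A.PosDef) :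
    (1 + A⁻¹)⁻¹ = (1 + A)⁻¹ * A := by
  have hdet : IsUnit A.det := (Matrix.isUnit_iff_isUnit_det A).mp hA.isUnit
  have hfac : 1 + A⁻¹ = A⁻¹ * (1 + A) := by
    rw [mul_add, mul_one, Matrix.nonsing_inv_mul _ hdet, add_comm]
  rw [hfac, Matrix.mul_inv_rev, Matrix.nonsing_inv_nonsing_inv _ hdet]

/-- The unique positive definite fixed points of the maps `u ↦ ϖ + (I+u)⁻¹ u` and
`v ↦ (I + (ϖ+v)⁻¹)⁻¹` are `u_∞ = ϖ/2 + (ϖ + (ϖ/2)²)^{1/2}` and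
`r_∞ = -ϖ/2 + (ϖ + (ϖ/2)²)^{1/2}`, respectively, and they satisfy
`r_∞ = (I + u_∞⁻¹)⁻¹` and `u_∞ = r_∞ + ϖ`. -/
theorem riccati_fixed_points {d : ℕ} (ϖ uinf rinf : Matrix (Fin d) (Fin d) ℝ)
    (hϖ : ϖ.PosDef)
    (hu : uinf = ((1/2 : ℝ)) • ϖ + psqrt (ϖ + ((1/2 : ℝ) • ϖ) * ((1/2 : ℝ) • ϖ)))
    (hrm : rinf = (-(1/2 : ℝ)) • ϖ + psqrt (ϖ + ((1/2 : ℝ) • ϖ) * ((1/2 : ℝ) • ϖ))) :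
    uinf.PosDef ∧
    uinf = ϖ + (1 + uinf)⁻¹ * uinf ∧
    (∀ u : Matrix (Fin d) (Fin d) ℝ, u.PosDef → u = ϖ + (1 + u)⁻¹ * u → u = uinf) ∧
    rinf.PosDef ∧
    rinf = (1 + (ϖ + rinf)⁻¹)⁻¹ ∧
    (∀ v : Matrix (Fin d) (Fin d) ℝ, v.PosDef → v = (1 + (ϖ + v)⁻¹)⁻¹ → v = rinf) ∧
    rinf = (1 + uinf⁻¹)⁻¹ ∧
    uinf = rinf + ϖ := by
  -- spectral setup
  set U : Matrix (Fin d) (Fin d) ℝ := (hϖ.1.eigenvectorUnitary : Matrix (Fin d) (Fin d) ℝ)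
    with hUdef
  set lam := hϖ.1.eigenvalues with hlamdef
  have hUU : U * star U = 1 := Matrix.mem_unitaryGroup_iff.mp (hϖ.1.eigenvectorUnitary).2
  have hU'U : star U * U = 1 := Matrix.mem_unitaryGroup_iff'.mp (hϖ.1.eigenvectorUnitary).2
  have hUunit : IsUnit U := by
    rw [Matrix.isUnit_iff_isUnit_det]
    have h := congrArg det hUU
    rw [det_mul, det_one] at h
    exact IsUnit.of_mul_eq_one _ h
  have hspec : ϖ = U * diagonal lam * star U := by
    have h := hϖ.1.spectral_theorem
    simpa using h
  have hcancel : ∀ x : Matrix (Fin d) (Fin d) ℝ, star U * (U * x) = x := by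
    intro x; rw [← mul_assoc, hU'U, one_mul]
  have hMmul : ∀ f g : Fin d → ℝ, (U * diagonal f * star U) * (U * diagonal g * star U)
      = U * diagonal (f * g) * star U := by
    intro f g
    simp only [mul_assoc, hcancel]
    simp only [← mul_assoc, diagonal_mul_diagonal]
    rfl
  have hMadd : ∀ f g : Fin d → ℝ, (U * diagonal f * star U) + (U * diagonal g * star U)
      = U * diagonal (f + g) * star U := by
    intro f g
    rw [← add_mul, ← mul_add, diagonal_add]
    rfl
  have hMsub : ∀ f g : Fin d → ℝ, (U * diagonal f * star U) - (U * diagonal g * star U)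
      = U * diagonal (f - g) * star U := by
    intro f g
    rw [← sub_mul, ← mul_sub, diagonal_sub]
    rfl
  have hMsmul : ∀ (c : ℝ) (f : Fin d → ℝ), c • (U * diagonal f * star U)
      = U * diagonal (c • f) * star U := by
    intro c f
    rw [diagonal_smul, mul_smul_comm, smul_mul_assoc]
  have hMone : U * diagonal (1 : Fin d → ℝ) * star U = 1 := by
    rw [show (1 : Fin d → ℝ) = fun _ => (1:ℝ) from rfl, diagonal_one, mul_one, hUU]
  have hMPD : ∀ f : Fin d → ℝ, (∀ i, 0 < f i) → (U * diagonal f * star U).PosDef := by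
    intro f hf
    have := posDef_conj' (Matrix.PosDef.diagonal hf) hUunit
    exact this
  have hlampos : ∀ i, 0 < lam i := fun i => hϖ.eigenvalues_pos i
  -- the square root
  set bfun : Fin d → ℝ := lam + (1/4 : ℝ) • (lam * lam) with hbfun
  have hbpos : ∀ i, 0 < bfun i := by
    intro i
    have := hlampos i
    simp only [hbfun, Pi.add_apply, Pi.smul_apply, Pi.mul_apply, smul_eq_mul]
    nlinarith
  set g : Fin d → ℝ := fun i => Real.sqrt (bfun i) with hgdef
  have hgpos : ∀ i, 0 < g i := fun i => Real.sqrt_pos.mpr (hbpos i)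
  have hgg : g * g = bfun := by
    funext i
    exact Real.mul_self_sqrt (hbpos i).le
  set s : Matrix (Fin d) (Fin d) ℝ := U * diagonal g * star U with hsdef
  set B : Matrix (Fin d) (Fin d) ℝ := ϖ + ((1/2 : ℝ) • ϖ) * ((1/2 : ℝ) • ϖ) with hBdef
  have hww : ((1/2 : ℝ) • ϖ) * ((1/2 : ℝ) • ϖ) = (1/4 : ℝ) • (ϖ * ϖ) := by
    rw [smul_mul_assoc, mul_smul_comm, smul_smul]
    norm_num
  have hBdiag : B = U * diagonal bfun * star U := by
    rw [hBdef, hww, hspec, hMmul, hMsmul, hMadd]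
  have hs2 : s * s = B := by
    rw [hsdef, hMmul, hgg, hBdiag]
  have hspd : s.PosDef := hMPD g hgpos
  have hBpd : B.PosDef := by
    rw [hBdiag]
    exact hMPD _ hbpos
  have hpsqrtB : psqrt B = s := by
    exact psqrt_eq_of_mul_self hBpd.posSemidef hspd.posSemidef hs2
  rw [hpsqrtB] at hu hrm
  -- commutation
  have hscomm : ϖ * s = s * ϖ := by
    have h1 := hMmul lam g
    have h2 := hMmul g lam
    rw [← hspec] at h1 h2
    rw [← hsdef] at h1 h2
    rw [h1, h2, mul_comm lam g]
  -- diagonal forms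
  have huM : uinf = U * diagonal ((1/2 : ℝ) • lam + g) * star U := by
    rw [hu, hspec, hMsmul, hMadd]
  have hrM : rinf = U * diagonal ((-(1/2) : ℝ) • lam + g) * star U := by
    rw [hrm, hspec, hMsmul, hMadd]
  -- positive definiteness
  have hupd : uinf.PosDef := by
    rw [huM]
    refine hMPD _ fun i => ?_
    have h1 := hlampos i; have h2 := hgpos i
    have e : ((1/2 : ℝ) • lam + g) i = (1/2) * lam i + g i := rfl
    rw [e]
    nlinarith
  have hrpd : rinf.PosDef := by
    rw [hrM]
    refine hMPD _ fun i => ?_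
    have h1 := hlampos i
    have h2 := hgpos i
    have h3 := congrFun hgg i
    have e2 : (g * g) i = g i * g i := rfl
    have e3 : bfun i = lam i + (1/4) * (lam i * lam i) := rfl
    rw [e2, e3] at h3
    have e : ((-(1/2) : ℝ) • lam + g) i = (-(1/2)) * lam i + g i := rfl
    rw [e]
    nlinarith
  -- key identity
  have hkey : (1 + uinf) * (uinf - ϖ) = uinf := by
    rw [huM, hspec, ← hMone, hMadd, hMsub, hMmul]
    suffices h : (1 + ((1/2 : ℝ) • lam + g)) * ((1/2 : ℝ) • lam + g - lam)
        = ((1/2 : ℝ) • lam + g) by rw [h]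
    funext i
    have h3 := congrFun hgg i
    have e2 : (g * g) i = g i * g i := rfl
    have e3 : bfun i = lam i + (1/4) * (lam i * lam i) := rfl
    rw [e2, e3] at h3
    have e4 : ((1 + ((1/2 : ℝ) • lam + g)) * ((1/2 : ℝ) • lam + g - lam)) i
        = (1 + ((1/2) * lam i + g i)) * ((1/2) * lam i + g i - lam i) := rfl
    have e5 : ((1/2 : ℝ) • lam + g) i = (1/2) * lam i + g i := rfl
    rw [e4, e5]
    nlinarith [h3]
  have h1updpd : (1 + uinf).PosDef := Matrix.PosDef.add Matrix.PosDef.one hupd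
  have h1udet : IsUnit (1 + uinf).det := (Matrix.isUnit_iff_isUnit_det _).mp h1updpd.isUnit
  have husub : uinf - ϖ = (1 + uinf)⁻¹ * uinf := by
    have h5 := congrArg (fun X => (1 + uinf)⁻¹ * X) hkey
    simp only [← mul_assoc, Matrix.nonsing_inv_mul _ h1udet, one_mul] at h5
    exact h5
  have hufix : uinf = ϖ + (1 + uinf)⁻¹ * uinf := by
    rw [← husub]
    abel
  -- uniqueness for u
  have huniq : ∀ u : Matrix (Fin d) (Fin d) ℝ, u.PosDef → u = ϖ + (1 + u)⁻¹ * u → u = uinf := by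
    intro u hupd' hufix'
    have h1pd : (1 + u).PosDef := Matrix.PosDef.add Matrix.PosDef.one hupd'
    have h1det : IsUnit (1 + u).det := (Matrix.isUnit_iff_isUnit_det _).mp h1pd.isUnit
    have hsub : u - ϖ = (1 + u)⁻¹ * u := sub_eq_of_eq_add' hufix'
    have h2 : (1 + u) * (u - ϖ) = u := by
      rw [hsub, ← mul_assoc, Matrix.mul_nonsing_inv _ h1det, one_mul]
    have hE1 : u * u - u * ϖ = ϖ := by
      have e : (1 + u) * (u - ϖ) = u - ϖ + (u * u - u * ϖ) := by noncomm_ring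
      rw [e] at h2
      have h3 : u * u - u * ϖ = u - (u - ϖ) := eq_sub_of_add_eq' h2
      rw [h3, sub_sub_cancel]
    have hut : uᵀ = u := by simpa using hupd'.1.eq
    have hϖt : ϖᵀ = ϖ := by simpa using hϖ.1.eq
    have hE2 : u * u - ϖ * u = ϖ := by
      have h4 := congrArg Matrix.transpose hE1
      simp only [transpose_sub, transpose_mul, hut, hϖt] at h4
      exact h4
    have hcommu : u * ϖ = ϖ * u := by
      have := hE1.trans hE2.symm
      exact sub_right_inj.mp this
    -- t := u - (1/2)•ϖ squares to B
    have ht2 : (u - (1/2 : ℝ) • ϖ) * (u - (1/2 : ℝ) • ϖ) = B := by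
      have e1 : (u - (1/2 : ℝ) • ϖ) * (u - (1/2 : ℝ) • ϖ)
          = u * u - ((1/2 : ℝ) • (u * ϖ) + (1/2 : ℝ) • (ϖ * u)) + (1/4 : ℝ) • (ϖ * ϖ) := by
        rw [sub_mul, mul_sub, mul_sub, mul_smul_comm, smul_mul_assoc, smul_mul_assoc,
          mul_smul_comm, smul_smul]
        norm_num
        abel
      have e2 : (1/2 : ℝ) • (u * ϖ) + (1/2 : ℝ) • (ϖ * u) = u * ϖ := by
        rw [hcommu, ← add_smul]
        norm_num
      rw [e1, e2, hBdef, hww, hE1]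
    -- t is PSD
    have htpsd : (u - (1/2 : ℝ) • ϖ).PosSemidef := by
      have huϖ : (u - ϖ).PosSemidef := by
        have hA : (u + u * u).PosSemidef := by
          refine Matrix.PosSemidef.add hupd'.posSemidef ?_
          have := Matrix.posSemidef_conjTranspose_mul_self u
          rwa [hupd'.1.eq] at this
        have h3 : (1 + u)⁻¹ * (u + u * u) * ((1 + u)⁻¹)ᴴ = u - ϖ := by
          have hH : ((1 + u)⁻¹)ᴴ = (1 + u)⁻¹ := by
            rw [conjTranspose_nonsing_inv, conjTranspose_add, conjTranspose_one, hupd'.1.eq]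
          rw [hH, show u + u * u = u * (1 + u) by rw [mul_add, mul_one],
            ← mul_assoc ((1 + u)⁻¹) u (1 + u), mul_assoc ((1 + u)⁻¹ * u) (1 + u) ((1 + u)⁻¹),
            Matrix.mul_nonsing_inv _ h1det, mul_one, ← hsub]
        rw [← h3]
        exact hA.mul_mul_conjTranspose_same _
      have hsum : u - (1/2 : ℝ) • ϖ = (u - ϖ) + (1/2 : ℝ) • ϖ := by
        module
      rw [hsum]
      exact huϖ.add (posDef_smul' (by norm_num) hϖ).posSemidef
    have hts : u - (1/2 : ℝ) • ϖ = s := by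
      rw [← psqrt_eq_of_mul_self hBpd.posSemidef htpsd ht2,
        psqrt_eq_of_mul_self hBpd.posSemidef hspd.posSemidef hs2]
    rw [hu, ← hts]
    abel
  -- rinf facts
  have hrueq : rinf = uinf - ϖ := by
    rw [hu, hrm]
    module
  have hvu : ϖ + rinf = uinf := by rw [hrueq]; abel
  have hrfix : rinf = (1 + uinf⁻¹)⁻¹ := by
    rw [inv_one_add_inv' hupd, ← husub, hrueq]
  refine ⟨hupd, hufix, huniq, hrpd, ?_, ?_, hrfix, by rw [hrueq]; abel⟩
  · rw [hvu]; exact hrfix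
  · intro v hvpd hvfix
    have hupd2 : (ϖ + v).PosDef := hϖ.add hvpd
    have h1pd : (1 + (ϖ + v)).PosDef := Matrix.PosDef.add Matrix.PosDef.one hupd2
    have hveq : v = (1 + (ϖ + v))⁻¹ * (ϖ + v) := by
      rw [← inv_one_add_inv' hupd2]; exact hvfix
    have hueq : ϖ + v = uinf := huniq (ϖ + v) hupd2 (by rw [← hveq])
    rw [hrueq, ← hueq]
    abel
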